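/- Let X be a normed space and Y, Z closed subspaces of X. Define Θ₀(Y,Z) = sup over y in the unit sphere of Y of dist(y, Z), and Ω₀(Y,Z) = sup over y in the unit sphere of Y of dist(y, S(Z)), where S(Z) is the unit sphere of Z. Then 0 ≤ Θ₀(Y,Z) ≤ Ω₀(Y,Z) ≤ 2·Θ₀(Y,Z) (assuming Z ≠ {0} so that S(Z) is nonempty). -/

import Mathlib

open Metric

/-- For closed subspaces Y, Z of a normed space X (Z nontrivial),
with Θ₀(Y,Z) = sup_{y ∈ S(Y)} dist(y, Z) and Ω₀(Y,Z) = sup_{y ∈ S(Y)} dist(y, S(Z)),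
we have 0 ≤ Θ₀ ≤ Ω₀ ≤ 2·Θ₀. -/
theorem stmt_0 (X : Type*) [NormedAddCommGroup X] [NormedSpace ℝ X]
    (Y Z : Subspace ℝ X) (hY : IsClosed (Y : Set X)) (hZ : IsClosed (Z : Set X))
    (hZne : ∃ z : X, z ∈ Z ∧ z ≠ 0)
    (Θ₀ Ω₀ : ℝ)
    (hΘ : Θ₀ = sSup {d : ℝ | ∃ y : X, y ∈ Y ∧ ‖y‖ = 1 ∧ d = Metric.infDist y (Z : Set X)})
    (hΩ : Ω₀ = sSup {d : ℝ | ∃ y : X, y ∈ Y ∧ ‖y‖ = 1 ∧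
      d = Metric.infDist y {z : X | z ∈ Z ∧ ‖z‖ = 1}}) :
    0 ≤ Θ₀ ∧ Θ₀ ≤ Ω₀ ∧ Ω₀ ≤ 2 * Θ₀ := by
  subst hΘ hΩ
  set S : Set X := {z : X | z ∈ Z ∧ ‖z‖ = 1} with hS
  obtain ⟨z₀, hz₀Z, hz₀ne⟩ := hZne
  have hwZ : (‖z₀‖⁻¹ • z₀) ∈ Z := Z.smul_mem _ hz₀Z
  have hw1 : ‖(‖z₀‖⁻¹ • z₀)‖ = 1 := norm_smul_inv_norm hz₀ne
  have hSne : S.Nonempty := ⟨_, hwZ, hw1⟩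
  have hZn : (Z : Set X).Nonempty := ⟨0, Z.zero_mem⟩
  -- key pointwise lemma
  have key : ∀ y : X, ‖y‖ = 1 → infDist y S ≤ 2 * infDist y (Z : Set X) := by
    intro y hy
    apply le_of_forall_pos_le_add
    intro ε hε
    obtain ⟨z, hzZ, hzd⟩ := (Metric.infDist_lt_iff hZn).1
      (lt_add_of_pos_right _ (by linarith : (0:ℝ) < ε/4))
    have hDnn : 0 ≤ infDist y (Z : Set X) := infDist_nonneg
    by_cases hz : z = 0
    · have h1 : (1:ℝ) < infDist y (Z : Set X) + ε/4 := by
        rw [hz, dist_zero_right, hy] at hzd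
        exact hzd
      have h2 : infDist y S ≤ dist y (‖z₀‖⁻¹ • z₀) :=
        infDist_le_dist_of_mem ⟨hwZ, hw1⟩
      have h3 : dist y (‖z₀‖⁻¹ • z₀) ≤ 2 := by
        rw [dist_eq_norm]
        calc ‖y - ‖z₀‖⁻¹ • z₀‖ ≤ ‖y‖ + ‖(‖z₀‖⁻¹ • z₀)‖ := norm_sub_le _ _
        _ = 2 := by rw [hy, hw1]; norm_num
      linarith
    · have hzn : (0:ℝ) < ‖z‖ := norm_pos_iff.2 hz
      have hmem : (‖z‖⁻¹ • z) ∈ S := ⟨Z.smul_mem _ hzZ, norm_smul_inv_norm hz⟩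
      have h2 : infDist y S ≤ dist y (‖z‖⁻¹ • z) := infDist_le_dist_of_mem hmem
      have h3 : dist y (‖z‖⁻¹ • z) ≤ dist y z + dist z (‖z‖⁻¹ • z) :=
        dist_triangle _ _ _
      have h4 : dist z (‖z‖⁻¹ • z) = |‖z‖ - 1| := by
        rw [dist_eq_norm]
        have he : z - ‖z‖⁻¹ • z = (1 - ‖z‖⁻¹) • z := by
          rw [sub_smul, one_smul]
        rw [he, norm_smul, Real.norm_eq_abs, ← abs_of_pos hzn, ← abs_mul]
        congr 1
        field_simp
        rw [abs_of_pos hzn]; ring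
      have h5 : |‖z‖ - 1| ≤ dist y z := by
        rw [dist_eq_norm]
        calc |‖z‖ - 1| = |‖z‖ - ‖y‖| := by rw [hy]
        _ ≤ ‖z - y‖ := abs_norm_sub_norm_le _ _
        _ = ‖y - z‖ := norm_sub_rev _ _
      linarith
  -- bounds on the sets
  have hΘb : ∀ d ∈ {d : ℝ | ∃ y : X, y ∈ Y ∧ ‖y‖ = 1 ∧ d = Metric.infDist y (Z : Set X)},
      d ≤ 1 := by
    rintro d ⟨y, hyY, hy1, rfl⟩
    calc infDist y (Z : Set X) ≤ dist y 0 := infDist_le_dist_of_mem Z.zero_mem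
    _ = 1 := by simp [hy1]
  have hΩb : ∀ d ∈ {d : ℝ | ∃ y : X, y ∈ Y ∧ ‖y‖ = 1 ∧ d = Metric.infDist y S},
      d ≤ 2 := by
    rintro d ⟨y, hyY, hy1, rfl⟩
    calc infDist y S ≤ dist y (‖z₀‖⁻¹ • z₀) := infDist_le_dist_of_mem ⟨hwZ, hw1⟩
    _ ≤ ‖y‖ + ‖(‖z₀‖⁻¹ • z₀)‖ := by rw [dist_eq_norm]; exact norm_sub_le _ _
    _ = 2 := by rw [hy1, hw1]; norm_num
  have hΘbdd : BddAbove {d : ℝ | ∃ y : X, y ∈ Y ∧ ‖y‖ = 1 ∧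
      d = Metric.infDist y (Z : Set X)} := ⟨1, hΘb⟩
  have hΩbdd : BddAbove {d : ℝ | ∃ y : X, y ∈ Y ∧ ‖y‖ = 1 ∧
      d = Metric.infDist y S} := ⟨2, hΩb⟩
  have hΘnn : 0 ≤ sSup {d : ℝ | ∃ y : X, y ∈ Y ∧ ‖y‖ = 1 ∧
      d = Metric.infDist y (Z : Set X)} :=
    Real.sSup_nonneg (by rintro d ⟨y, _, _, rfl⟩; exact infDist_nonneg)
  have hΩnn : 0 ≤ sSup {d : ℝ | ∃ y : X, y ∈ Y ∧ ‖y‖ = 1 ∧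
      d = Metric.infDist y S} :=
    Real.sSup_nonneg (by rintro d ⟨y, _, _, rfl⟩; exact infDist_nonneg)
  refine ⟨hΘnn, ?_, ?_⟩
  · apply Real.sSup_le _ hΩnn
    rintro d ⟨y, hyY, hy1, rfl⟩
    have h1 : infDist y (Z : Set X) ≤ infDist y S :=
      infDist_le_infDist_of_subset (fun x hx => hx.1) hSne
    exact h1.trans (le_csSup hΩbdd ⟨y, hyY, hy1, rfl⟩)
  · apply Real.sSup_le _ (by linarith)
    rintro d ⟨y, hyY, hy1, rfl⟩
    calc infDist y S ≤ 2 * infDist y (Z : Set X) := key y hy1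
    _ ≤ 2 * sSup _ := by
      have := le_csSup hΘbdd ⟨y, hyY, hy1, rfl⟩
      linarith
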